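/- arXiv:2009.12081 — 7 statements merged into one kernel-verified Lean document; each statement's English description precedes it below -/
import Mathlib

section
/- Demonic composition of binary relations is associative: for all binary relations r, s, t on a set X, (r * s) * t = r * (s * t). -/
variable {X : Type*}

/-- Domain of a binary relation. -/
def dom (s : Set (X × X)) : Set X := {x | ∃ y, (x, y) ∈ s}

/-- Range of a binary relation. -/
def ran (s : Set (X × X)) : Set X := {y | ∃ x, (x, y) ∈ s}

/-- Ordinary (angelic) relational composition. -/
def rcomp (s t : Set (X × X)) : Set (X × X) :=
  {p | ∃ z, (p.1, z) ∈ s ∧ (z, p.2) ∈ t}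

/-- Demonic composition. -/
def dcomp (s t : Set (X × X)) : Set (X × X) :=
  {p | (∃ z, (p.1, z) ∈ s ∧ (z, p.2) ∈ t) ∧ ∀ w, (p.1, w) ∈ s → ∃ v, (w, v) ∈ t}

/-- Demonic refinement. -/
def dref (s t : Set (X × X)) : Prop :=
  dom t ⊆ dom s ∧ ∀ p : X × X, p ∈ s → p.1 ∈ dom t → p ∈ t

/-- Demonic join. -/
def djoin (s t : Set (X × X)) : Set (X × X) :=
  {p | p ∈ s ∪ t ∧ p.1 ∈ dom s ∧ p.1 ∈ dom t}

/-- The constellation product `s · t` of binary relations is defined iff `ran s ⊆ dom t`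
(and then equals `rcomp s t`). -/
def cdef (s t : Set (X × X)) : Prop := ran s ⊆ dom t

theorem dcomp_assoc (r s t : Set (X × X)) :
    dcomp (dcomp r s) t = dcomp r (dcomp s t) := by
  ext ⟨x, y⟩
  simp only [dcomp, Set.mem_setOf_eq]
  constructor
  · rintro ⟨⟨z, ⟨⟨a, har, has⟩, hdom⟩, hzt⟩, htot⟩
    have key : ∀ w u, (x, w) ∈ r → (w, u) ∈ s → ∃ v, (u, v) ∈ t := by
      intro w u hw hu
      exact htot u ⟨⟨w, hw, hu⟩, hdom⟩
    refine ⟨⟨a, har, ⟨⟨z, has, hzt⟩, fun u hu => key a u har hu⟩⟩, ?_⟩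
    intro w hw
    obtain ⟨u, hu⟩ := hdom w hw
    obtain ⟨v, hv⟩ := key w u hw hu
    exact ⟨v, ⟨u, hu, hv⟩, fun u' hu' => key w u' hw hu'⟩
  · rintro ⟨⟨a, har, ⟨⟨z, has, hzt⟩, hdom⟩⟩, htot⟩
    have hds : ∀ w, (x, w) ∈ r → ∃ u, (w, u) ∈ s := by
      intro w hw
      obtain ⟨v, ⟨u, hu, _⟩, _⟩ := htot w hw
      exact ⟨u, hu⟩
    refine ⟨⟨z, ⟨⟨a, har, has⟩, hds⟩, hzt⟩, ?_⟩
    rintro w ⟨⟨b, hbr, hbs⟩, _⟩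
    obtain ⟨v, _, hbd⟩ := htot b hbr
    exact hbd w hbs
end

section
/- For each n ≥ 1, the quasi-equation holds over binary relations: if s₀ ⊆ sₙ and sᵢ ⊆ sᵢ₊₁ * t for all i < n, then s₀ * t ⊆ sₙ * t, where * is demonic composition. -/
variable {X : Type*}

theorem quasi_equation (n : ℕ) (hn : 1 ≤ n) (s : ℕ → Set (X × X)) (t : Set (X × X))
    (h₀ : s 0 ⊆ s n) (h : ∀ i < n, s i ⊆ dcomp (s (i + 1)) t) :
    dcomp (s 0) t ⊆ dcomp (s n) t := by
  rintro p ⟨⟨z, hz, hzt⟩, hdef⟩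
  have key : ∀ i ≤ n, (∃ w, (p.1, w) ∈ s i) ∧ (∀ w, (p.1, w) ∈ s i → ∃ v, (w, v) ∈ t) := by
    intro i
    induction i with
    | zero => exact fun _ => ⟨⟨z, hz⟩, hdef⟩
    | succ i ih =>
      intro hi
      obtain ⟨⟨w, hw⟩, _⟩ := ih (Nat.le_of_succ_le hi)
      have := h i (Nat.lt_of_succ_le hi) hw
      exact ⟨⟨(this.1).choose, (this.1).choose_spec.1⟩, this.2⟩
  exact ⟨⟨z, h₀ hz, hzt⟩, (key n le_rfl).2⟩
end

section
/- Demonic composition distributes over demonic join: for binary relations a, b, c, d on a set X, (a ⊔⊔ b) * (c ⊔⊔ d) = (a*c) ⊔⊔ (a*d) ⊔⊔ (b*c) ⊔⊔ (b*d). -/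
variable {X : Type*}

lemma mem_dom {s : Set (X × X)} {x : X} : x ∈ dom s ↔ ∃ y, (x, y) ∈ s := Iff.rfl

lemma mem_dcomp {s t : Set (X × X)} {x y : X} :
    (x, y) ∈ dcomp s t ↔ (∃ z, (x, z) ∈ s ∧ (z, y) ∈ t) ∧ ∀ w, (x, w) ∈ s → w ∈ dom t :=
  Iff.rfl

lemma mem_djoin {s t : Set (X × X)} {x y : X} :
    (x, y) ∈ djoin s t ↔ ((x, y) ∈ s ∨ (x, y) ∈ t) ∧ x ∈ dom s ∧ x ∈ dom t := Iff.rfl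

lemma dom_dcomp {s t : Set (X × X)} {x : X} :
    x ∈ dom (dcomp s t) ↔ x ∈ dom s ∧ ∀ w, (x, w) ∈ s → w ∈ dom t := by
  constructor
  · rintro ⟨y, ⟨z, hz1, hz2⟩, hall⟩
    exact ⟨⟨z, hz1⟩, hall⟩
  · rintro ⟨⟨z, hz⟩, hall⟩
    obtain ⟨v, hv⟩ := hall z hz
    exact ⟨v, ⟨z, hz, hv⟩, hall⟩

lemma dom_djoin {s t : Set (X × X)} {x : X} :
    x ∈ dom (djoin s t) ↔ x ∈ dom s ∧ x ∈ dom t := by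
  constructor
  · rintro ⟨y, _, h⟩; exact h
  · rintro ⟨⟨z, hz⟩, hb⟩
    exact ⟨z, Or.inl hz, ⟨z, hz⟩, hb⟩
theorem dcomp_distrib_djoin (a b c d : Set (X × X)) :
    dcomp (djoin a b) (djoin c d) =
      djoin (djoin (djoin (dcomp a c) (dcomp a d)) (dcomp b c)) (dcomp b d) := by
  ext ⟨x, y⟩
  simp only [mem_dcomp, mem_djoin, dom_dcomp, dom_djoin]
  constructor
  · rintro ⟨⟨z, ⟨hz1, ha, hb⟩, hz2, hzc, hzd⟩, hall⟩
    have key : ∀ w, ((x, w) ∈ a ∨ (x, w) ∈ b) → w ∈ dom c ∧ w ∈ dom d :=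
      fun w hw => hall w ⟨hw, ha, hb⟩
    have hac : ∀ w, (x, w) ∈ a → w ∈ dom c := fun w hw => (key w (Or.inl hw)).1
    have had : ∀ w, (x, w) ∈ a → w ∈ dom d := fun w hw => (key w (Or.inl hw)).2
    have hbc : ∀ w, (x, w) ∈ b → w ∈ dom c := fun w hw => (key w (Or.inr hw)).1
    have hbd : ∀ w, (x, w) ∈ b → w ∈ dom d := fun w hw => (key w (Or.inr hw)).2
    have dA : (x ∈ dom a ∧ ∀ w, (x, w) ∈ a → w ∈ dom c) ∧
        x ∈ dom a ∧ ∀ w, (x, w) ∈ a → w ∈ dom d := ⟨⟨ha, hac⟩, ha, had⟩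
    refine ⟨?_, ⟨dA, hb, hbc⟩, hb, hbd⟩
    rcases hz1 with hza | hzb <;> rcases hz2 with hzc' | hzd'
    · exact Or.inl ⟨Or.inl ⟨Or.inl ⟨⟨z, hza, hzc'⟩, hac⟩, dA⟩, dA, hb, hbc⟩
    · exact Or.inl ⟨Or.inl ⟨Or.inr ⟨⟨z, hza, hzd'⟩, had⟩, dA⟩, dA, hb, hbc⟩
    · exact Or.inl ⟨Or.inr ⟨⟨z, hzb, hzc'⟩, hbc⟩, dA, hb, hbc⟩
    · exact Or.inr ⟨⟨z, hzb, hzd'⟩, hbd⟩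
  · rintro ⟨hU, ⟨⟨⟨ha, hac⟩, -, had⟩, hb, hbc⟩, -, hbd⟩
    have key : ∀ w, ((x, w) ∈ a ∨ (x, w) ∈ b) → w ∈ dom c ∧ w ∈ dom d := by
      rintro w (hw | hw)
      · exact ⟨hac w hw, had w hw⟩
      · exact ⟨hbc w hw, hbd w hw⟩
    have mk : ∀ z, ((x, z) ∈ a ∨ (x, z) ∈ b) → ((z, y) ∈ c ∨ (z, y) ∈ d) →
        ∃ z', (((x, z') ∈ a ∨ (x, z') ∈ b) ∧ x ∈ dom a ∧ x ∈ dom b) ∧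
          ((z', y) ∈ c ∨ (z', y) ∈ d) ∧ z' ∈ dom c ∧ z' ∈ dom d := by
      intro z h1 h2
      obtain ⟨hzc, hzd⟩ := key z h1
      exact ⟨z, ⟨h1, ha, hb⟩, h2, hzc, hzd⟩
    refine ⟨?_, fun w hw => key w hw.1⟩
    rcases hU with ⟨⟨⟨⟨z, h1, h2⟩, -⟩ | ⟨⟨z, h1, h2⟩, -⟩, -⟩ | ⟨⟨z, h1, h2⟩, -⟩, -⟩ | ⟨⟨z, h1, h2⟩, -⟩
    · exact mk z (Or.inl h1) (Or.inl h2)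
    · exact mk z (Or.inl h1) (Or.inr h2)
    · exact mk z (Or.inr h1) (Or.inl h2)
    · exact mk z (Or.inr h1) (Or.inr h2)
end

section
/- Every ordered semigroup embeds into an ordered semigroup of binary relations under relational composition and inclusion (Zareckiĭ's theorem): there is a set X and an injective map θ from the semigroup to binary relations on X with θ(ab) = θ(a);θ(b) and a ≤ b iff θ(a) ⊆ θ(b). -/
variable {X : Type*}

theorem zareckii {A : Type} [Semigroup A] [PartialOrder A]
    (hl : ∀ a b c : A, a ≤ b → c * a ≤ c * b)
    (hr : ∀ a b c : A, a ≤ b → a * c ≤ b * c) :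
    ∃ (Y : Type) (θ : A → Set (Y × Y)), Function.Injective θ ∧
      (∀ a b : A, θ (a * b) = rcomp (θ a) (θ b)) ∧
      (∀ a b : A, a ≤ b ↔ θ a ⊆ θ b) := by
  classical
  let act : Option A → A → A := fun x a => match x with
    | none => a
    | some w => w * a
  have act_mul : ∀ (x : Option A) (a b : A), act x (a * b) = act x a * b := by
    intro x a b
    cases x with
    | none => rfl
    | some w => exact (mul_assoc w a b).symm
  have act_mono : ∀ (x : Option A) (a b : A), a ≤ b → act x a ≤ act x b := by
    intro x a b h
    cases x with
    | none => exact h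
    | some w => exact hl a b w h
  refine ⟨Option A, fun a => {p | ∃ u, p.2 = some u ∧ u ≤ act p.1 a}, ?_, ?_, ?_⟩
  · -- injectivity, proved via order reflection below; do it directly
    intro a b hab
    have hab' : {p : Option A × Option A | ∃ u, p.2 = some u ∧ u ≤ act p.1 a} =
        {p : Option A × Option A | ∃ u, p.2 = some u ∧ u ≤ act p.1 b} := hab
    have h1 : (⟨none, some a⟩ : Option A × Option A) ∈
        {p : Option A × Option A | ∃ u, p.2 = some u ∧ u ≤ act p.1 b} := by
      rw [← hab']; exact ⟨a, rfl, le_refl a⟩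
    have h2 : (⟨none, some b⟩ : Option A × Option A) ∈
        {p : Option A × Option A | ∃ u, p.2 = some u ∧ u ≤ act p.1 a} := by
      rw [hab']; exact ⟨b, rfl, le_refl b⟩
    obtain ⟨u, hu, hle⟩ := h1
    obtain ⟨v, hv, hle'⟩ := h2
    cases Option.some.inj hu
    cases Option.some.inj hv
    exact le_antisymm hle hle'
  · intro a b
    ext ⟨x, y⟩
    constructor
    · rintro ⟨u, hy, hu⟩
      exact ⟨some (act x a), ⟨act x a, rfl, le_refl _⟩,
        ⟨u, hy, by rw [act_mul] at hu; exact hu⟩⟩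
    · rintro ⟨z, ⟨u, hz, hu⟩, ⟨v, hy, hv⟩⟩
      subst hz
      refine ⟨v, hy, ?_⟩
      rw [act_mul]
      exact le_trans hv (hr u (act x a) b hu)
  · intro a b
    constructor
    · rintro h ⟨x, y⟩ ⟨u, hy, hu⟩
      exact ⟨u, hy, le_trans hu (act_mono x a b h)⟩
    · intro h
      have hmem : (⟨none, some a⟩ : Option A × Option A) ∈
          {p : Option A × Option A | ∃ u, p.2 = some u ∧ u ≤ act p.1 a} :=
        ⟨a, rfl, le_refl a⟩
      obtain ⟨u, hu, hle⟩ := h hmem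
      cases Option.some.inj hu
      exact hle
end

section
/- Every ordered semigroup with zero (a zero element 0 with 0·a = a·0 = 0 and 0 ≤ a for all a) embeds into binary relations on some set under relational composition and inclusion, with 0 mapped to the empty relation. -/
variable {X : Type*}

theorem zareckii_with_zero {A : Type} [Semigroup A] [PartialOrder A]
    (hl : ∀ a b c : A, a ≤ b → c * a ≤ c * b)
    (hr : ∀ a b c : A, a ≤ b → a * c ≤ b * c)
    (z : A) (hz : ∀ a : A, z * a = z ∧ a * z = z) (hz' : ∀ a : A, z ≤ a) :
    ∃ (Y : Type) (θ : A → Set (Y × Y)), Function.Injective θ ∧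
      (∀ a b : A, θ (a * b) = rcomp (θ a) (θ b)) ∧
      (∀ a b : A, a ≤ b ↔ θ a ⊆ θ b) ∧
      θ z = ∅ := by
  classical
  -- x ⋆ a with x ∈ Option A (none = adjoined identity)
  let m : Option A → A → A := fun x a => match x with
    | none => a
    | some c => c * a
  have hm_assoc : ∀ x a b, m x (a * b) = m x a * b := by
    intro x a b; cases x with
    | none => rfl
    | some c => exact (mul_assoc c a b).symm
  have hm_mono : ∀ (x : Option A) (a b : A), a ≤ b → m x a ≤ m x b := by
    intro x a b h; cases x with
    | none => exact h
    | some c => exact hl a b c h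
  refine ⟨Option A, fun a => {p | ∃ y, p.2 = some y ∧ y ≠ z ∧ y ≤ m p.1 a}, ?_, ?_, ?_, ?_⟩
  · -- injectivity follows from order-reflection; prove order first below; do directly
    intro a b hab
    have key : ∀ u v : A, ({p : Option A × Option A | ∃ y, p.2 = some y ∧ y ≠ z ∧ y ≤ m p.1 u}
        ⊆ {p | ∃ y, p.2 = some y ∧ y ≠ z ∧ y ≤ m p.1 v}) → u ≤ v := by
      intro u v hsub
      by_cases hu : u = z
      · subst hu; exact hz' v
      · have : ((none, some u) : Option A × Option A) ∈
            {p : Option A × Option A | ∃ y, p.2 = some y ∧ y ≠ z ∧ y ≤ m p.1 u} :=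
          ⟨u, rfl, hu, le_refl u⟩
        obtain ⟨y, hy, _, hle⟩ := hsub this
        cases hy
        exact hle
    exact le_antisymm (key a b (le_of_eq hab)) (key b a (le_of_eq hab.symm))
  · intro a b
    ext p
    constructor
    · rintro ⟨y, hy, hyz, hle⟩
      by_cases hma : m p.1 a = z
      · exfalso
        have : m p.1 (a * b) = z := by
          rw [hm_assoc, hma, (hz b).1]
        rw [this] at hle
        exact hyz (le_antisymm hle (hz' y))
      · exact ⟨some (m p.1 a), ⟨m p.1 a, rfl, hma, le_refl _⟩,
          ⟨y, hy, hyz, by rw [hm_assoc] at hle; exact hle⟩⟩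
    · rintro ⟨w, ⟨y1, hy1, hy1z, hle1⟩, ⟨y2, hy2, hy2z, hle2⟩⟩
      refine ⟨y2, hy2, hy2z, ?_⟩
      rw [hm_assoc]
      subst hy1
      exact le_trans hle2 (hr y1 (m p.1 a) b hle1)
  · intro a b
    constructor
    · rintro hab p ⟨y, hy, hyz, hle⟩
      exact ⟨y, hy, hyz, le_trans hle (hm_mono p.1 a b hab)⟩
    · intro hsub
      by_cases ha : a = z
      · subst ha; exact hz' b
      · obtain ⟨y, hy, _, hle⟩ := hsub (show ((none, some a) : Option A × Option A) ∈ _ from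
          ⟨a, rfl, ha, le_refl a⟩)
        cases hy
        exact hle
  · ext p
    simp only [Set.mem_setOf_eq, Set.mem_empty_iff_false, iff_false]
    rintro ⟨y, hy, hyz, hle⟩
    have : m p.1 z = z := by cases p.1 with
      | none => rfl
      | some c => exact (hz c).2
    rw [this] at hle
    exact hyz (le_antisymm hle (hz' y))
end

section
/- Every ordered pre-constellation (P, ≤, ·) embeds into the binary relations on P ∪ {e} (e a new element) under inclusion and partial constellation product, via p ↦ ρ_p = {(x,y) : x·p defined and y ≤ x·p} ∪ {(e,y) : y ≤ p}: the map is injective, s ≤ t iff ρ_s ⊆ ρ_t, s·t is defined iff ρ_s·ρ_t is defined, and in that case ρ_{s·t} = ρ_s·ρ_t. -/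
variable {X : Type*}

/-- The representing relation for an element of an ordered pre-constellation,
over the base set `P ∪ {e}` (with `e = none`). -/
def rho {P : Type*} [LE P] (D : P → P → Prop) (m : P → P → P) (p : P) :
    Set (Option P × Option P) :=
  {q | (∃ x y, q.1 = some x ∧ q.2 = some y ∧ D x p ∧ y ≤ m x p) ∨
       (∃ y, q.1 = none ∧ q.2 = some y ∧ y ≤ p)}

theorem ordered_preconstellation_embeds {P : Type*} [PartialOrder P]
    (D : P → P → Prop) (m : P → P → P)
    (law1 : ∀ x y z : P, D y z → D x (m y z) →
      D x y ∧ D (m x y) z ∧ m (m x y) z = m x (m y z))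
    (law2 : ∀ x y z : P, D x y → D y z → D x (m y z))
    (law3 : ∀ s t u v : P, s ≤ u → t ≤ v → D s t → D u v → m s t ≤ m u v)
    (law4 : ∀ s t u v : P, s ≤ u → t ≤ v → D u t → D s v) :
    Function.Injective (rho D m) ∧
    (∀ s t : P, s ≤ t ↔ rho D m s ⊆ rho D m t) ∧
    (∀ s t : P, D s t ↔ cdef (rho D m s) (rho D m t)) ∧
    (∀ s t : P, D s t → rcomp (rho D m s) (rho D m t) = rho D m (m s t)) := by
  have hle : ∀ s t : P, s ≤ t ↔ rho D m s ⊆ rho D m t := by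
    intro s t
    constructor
    · intro hst q hq
      rcases hq with ⟨x, y, h1, h2, hD, hy⟩ | ⟨y, h1, h2, hy⟩
      · have hDt : D x t := law4 x s x t le_rfl hst hD
        exact Or.inl ⟨x, y, h1, h2, hDt, le_trans hy (law3 x s x t le_rfl hst hD hDt)⟩
      · exact Or.inr ⟨y, h1, h2, le_trans hy hst⟩
    · intro h
      have : ((none : Option P), some s) ∈ rho D m s := Or.inr ⟨s, rfl, rfl, le_rfl⟩
      rcases h this with ⟨x, y, h1, _, _, _⟩ | ⟨y, _, h2, hy⟩
      · exact absurd h1 (by simp)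
      · obtain rfl : s = y := by simpa using h2
        exact hy
  refine ⟨?_, hle, ?_, ?_⟩
  · intro s t h
    exact le_antisymm ((hle s t).2 h.le) ((hle t s).2 h.ge)
  · intro s t
    constructor
    · intro hD q hq
      rcases hq with ⟨x, hx⟩
      rcases hx with ⟨x', y, h1, h2, hDx, hy⟩ | ⟨y, h1, h2, hy⟩
      · -- q = some y, D x' s, y ≤ m x' s
        have hxst : D x' (m s t) := law2 x' s t hDx hD
        obtain ⟨_, hDm, _⟩ := law1 x' s t hD hxst
        have hDy : D y t := law4 y t (m x' s) t hy le_rfl hDm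
        subst h2
        exact ⟨some (m y t), Or.inl ⟨y, m y t, rfl, rfl, hDy, le_rfl⟩⟩
      · have hDy : D y t := law4 y t s t hy le_rfl hD
        subst h2
        exact ⟨some (m y t), Or.inl ⟨y, m y t, rfl, rfl, hDy, le_rfl⟩⟩
    · intro h
      have : (some s : Option P) ∈ ran (rho D m s) :=
        ⟨none, Or.inr ⟨s, rfl, rfl, le_rfl⟩⟩
      rcases h this with ⟨w, hw⟩
      rcases hw with ⟨x, y, h1, _, hD, _⟩ | ⟨y, h1, _, _⟩
      · obtain rfl : s = x := by simpa using h1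
        exact hD
      · exact absurd h1 (by simp)
  · intro s t hD
    ext q
    constructor
    · rintro ⟨b, hb1, hb2⟩
      rcases hb2 with ⟨y, z, hb, hq2, hDy, hz⟩ | ⟨y, hb, _, _⟩
      · subst hb
        rcases hb1 with ⟨x, y', h1, h2, hDx, hy'⟩ | ⟨y', h1, h2, hy'⟩
        · obtain rfl : y' = y := by simpa using h2.symm
          have hxst : D x (m s t) := law2 x s t hDx hD
          obtain ⟨_, hDm, heq⟩ := law1 x s t hD hxst
          have hDy2 : D y' t := law4 y' t (m x s) t hy' le_rfl hDm
          have : z ≤ m (m x s) t := le_trans hz (law3 y' t (m x s) t hy' le_rfl hDy hDm)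
          exact Or.inl ⟨x, z, h1, hq2, hxst, heq ▸ this⟩
        · obtain rfl : y' = y := by simpa using h2.symm
          have : z ≤ m s t := le_trans hz (law3 y' t s t hy' le_rfl hDy hD)
          exact Or.inr ⟨z, h1, hq2, this⟩
      · -- second coordinate of pair in rho t can't be matched with b = none? here hb : b = none
        subst hb
        rcases hb1 with ⟨_, _, _, h2, _, _⟩ | ⟨_, _, h2, _⟩ <;> exact absurd h2 (by simp)
    · rintro (⟨x, z, h1, h2, hDx, hz⟩ | ⟨z, h1, h2, hz⟩)
      · obtain ⟨hDxs, hDm, heq⟩ := law1 x s t hD hDx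
        refine ⟨some (m x s), Or.inl ⟨x, m x s, h1, rfl, hDxs, le_rfl⟩,
          Or.inl ⟨m x s, z, rfl, h2, hDm, heq ▸ hz⟩⟩
      · exact ⟨some s, Or.inr ⟨s, h1, rfl, le_rfl⟩,
          Or.inl ⟨s, z, rfl, h2, hD, hz⟩⟩
end

section
/- The constellation product satisfies the following laws over binary relations with demonic refinement: for all n ≥ 1, if s ⊑ t (demonic refinement) and the iterated product ((...((x·t)·u₁)·u₂)...)·uₙ is defined, then ((...((x·s)·u₁)·u₂)...)·uₙ is defined. -/
variable {X : Type*}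

/-- Iterated constellation product `((a · u 1) · u 2) ⋯ · u k`. -/
def itP (a : Set (X × X)) (u : ℕ → Set (X × X)) : ℕ → Set (X × X)
  | 0 => a
  | k + 1 => rcomp (itP a u k) (u (k + 1))

/-- Definedness of the iterated constellation product. -/
def itD (a : Set (X × X)) (u : ℕ → Set (X × X)) : ℕ → Prop
  | 0 => True
  | k + 1 => itD a u k ∧ cdef (itP a u k) (u (k + 1))

lemma itP_mono {a b : Set (X × X)} (u : ℕ → Set (X × X)) (hab : a ⊆ b) :
    ∀ k, itP a u k ⊆ itP b u k := by
  intro k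
  induction k with
  | zero => exact hab
  | succ k ih =>
    rintro p ⟨z, hz1, hz2⟩
    exact ⟨z, ih hz1, hz2⟩

lemma ran_mono {a b : Set (X × X)} (hab : a ⊆ b) : ran a ⊆ ran b := by
  rintro y ⟨x, hx⟩; exact ⟨x, hab hx⟩

theorem constellation_dref_laws (n : ℕ) (hn : 1 ≤ n)
    (s t x : Set (X × X)) (u : ℕ → Set (X × X))
    (hst : dref s t)
    (h : cdef x t ∧ itD (rcomp x t) u n) :
    cdef x s ∧ itD (rcomp x s) u n := by
  obtain ⟨hc, hd⟩ := h
  obtain ⟨hdom, hres⟩ := hst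
  have hcs : cdef x s := fun y hy => hdom (hc hy)
  have hsub : rcomp x s ⊆ rcomp x t := by
    rintro p ⟨z, hz1, hz2⟩
    refine ⟨z, hz1, hres (z, p.2) hz2 (hc ⟨p.1, hz1⟩)⟩
  refine ⟨hcs, ?_⟩
  clear hn
  induction n with
  | zero => trivial
  | succ k ih =>
    exact ⟨ih hd.1, fun y hy => hd.2 (ran_mono (itP_mono u hsub k) hy)⟩
end
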